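/- Let F be an r-sort species admitting a composition operator Η. Then for all nonnegative integers k and ℓ with k ≠ ℓ and every r-tuple Ω of finite sets, the sets F_Η^(k)[Ω] and F_Η^(ℓ)[Ω] are disjoint: F_Η^(k)[Ω] ∩ F_Η^(ℓ)[Ω] = ∅. -/

import Mathlib

open scoped Classical

noncomputable section

/-- Objects of `Set^r`: `r`-tuples of finite sets (realized as finite subsets of `ℕ`). -/
abbrev Obj (r : ℕ) := Fin r → Finset ℕ

variable {r : ℕ}

/-- The `r`-tuple of empty sets. -/
def oEmpty (r : ℕ) : Obj r := fun _ => ∅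

/-- Componentwise union (the disjoint union `⨿` when the arguments are
componentwise disjoint). -/
def oUnion (Ω₁ Ω₂ : Obj r) : Obj r := fun i => Ω₁ i ∪ Ω₂ i

/-- Componentwise intersection. -/
def oInter (Ω₁ Ω₂ : Obj r) : Obj r := fun i => Ω₁ i ∩ Ω₂ i

/-- Componentwise set difference. -/
def oDiff (Ω₁ Ω₂ : Obj r) : Obj r := fun i => Ω₁ i \ Ω₂ i

/-- Componentwise disjointness. -/
def oDisj (Ω₁ Ω₂ : Obj r) : Prop := ∀ i, Disjoint (Ω₁ i) (Ω₂ i)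

/-- Componentwise containment. -/
def oSub (Ω₁ Ω₂ : Obj r) : Prop := ∀ i, Ω₁ i ⊆ Ω₂ i

/-- A morphism of `Set^r`: an `r`-tuple of bijections between the components. -/
def Mor (Ω₁ Ω₂ : Obj r) : Type := ∀ i, {x // x ∈ Ω₁ i} ≃ {x // x ∈ Ω₂ i}

/-- The identity morphism. -/
def idMor (Ω : Obj r) : Mor Ω Ω := fun _ => Equiv.refl _

/-- Composition of morphisms. -/
def compMor {Ω₁ Ω₂ Ω₃ : Obj r} (f : Mor Ω₁ Ω₂) (g : Mor Ω₂ Ω₃) : Mor Ω₁ Ω₃ :=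
  fun i => (f i).trans (g i)

/-- An `r`-sort species: a (covariant) functor from `Set^r` to the category of
finite sets and bijections.  The value `F[Ω]` is the finite set `obj Ω`, and the
action on a morphism `f` is encoded by the function `map f : ℕ → ℕ` (only its
values on `obj Ω₁` are relevant). -/
structure Species (r : ℕ) where
  obj : Obj r → Finset ℕ
  map : ∀ {Ω₁ Ω₂ : Obj r}, Mor Ω₁ Ω₂ → ℕ → ℕ
  map_mem : ∀ {Ω₁ Ω₂ : Obj r} (f : Mor Ω₁ Ω₂), ∀ x ∈ obj Ω₁, map f x ∈ obj Ω₂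
  map_id : ∀ (Ω : Obj r), ∀ x ∈ obj Ω, map (idMor Ω) x = x
  map_comp : ∀ {Ω₁ Ω₂ Ω₃ : Obj r} (f : Mor Ω₁ Ω₂) (g : Mor Ω₂ Ω₃), ∀ x ∈ obj Ω₁,
    map (compMor f g) x = map g (map f x)

/-- The canonical identification of a disjoint union `s ∪ t` with the sum `s ⊕ t`. -/
def finsetSumEquiv {s t : Finset ℕ} (h : Disjoint s t) :
    {x // x ∈ s ∪ t} ≃ {x // x ∈ s} ⊕ {x // x ∈ t} :=
  (Equiv.subtypeEquivRight (fun x => by simp)).trans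
    (Equiv.Set.union (s := (↑s : Set ℕ)) (t := (↑t : Set ℕ)) (by exact_mod_cast h))

/-- The disjoint union of two bijections, as a bijection between unions. -/
def finsetUnionEquiv {s t s' t' : Finset ℕ} (h : Disjoint s t) (h' : Disjoint s' t')
    (f : {x // x ∈ s} ≃ {x // x ∈ s'}) (g : {x // x ∈ t} ≃ {x // x ∈ t'}) :
    {x // x ∈ s ∪ t} ≃ {x // x ∈ s' ∪ t'} :=
  (finsetSumEquiv h).trans ((f.sumCongr g).trans (finsetSumEquiv h').symm)

/-- The disjoint union `f ⨿ g` of two morphisms of `Set^r`. -/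
def morUnion {Ω₁ Ω₂ Ω₁' Ω₂' : Obj r} (h : oDisj Ω₁ Ω₂) (h' : oDisj Ω₁' Ω₂')
    (f : Mor Ω₁ Ω₁') (g : Mor Ω₂ Ω₂') : Mor (oUnion Ω₁ Ω₂) (oUnion Ω₁' Ω₂') :=
  fun i => finsetUnionEquiv (h i) (h' i) (f i) (g i)

/-- A composition operator `Η` for the species `F`: a natural transformation from
`F × F` (on pairs of componentwise disjoint objects) to `F ∘ ⨿` with injective
components, satisfying Axiom (D1). -/
structure CompOp {r : ℕ} (F : Species r) where
  η : Obj r → Obj r → ℕ × ℕ → ℕ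
  mem_η : ∀ {Ω₁ Ω₂ : Obj r}, oDisj Ω₁ Ω₂ → ∀ x ∈ F.obj Ω₁, ∀ y ∈ F.obj Ω₂,
    η Ω₁ Ω₂ (x, y) ∈ F.obj (oUnion Ω₁ Ω₂)
  inj_η : ∀ {Ω₁ Ω₂ : Obj r}, oDisj Ω₁ Ω₂ →
    Set.InjOn (η Ω₁ Ω₂) ((F.obj Ω₁ : Set ℕ) ×ˢ (F.obj Ω₂ : Set ℕ))
  natural : ∀ {Ω₁ Ω₂ Ω₁' Ω₂' : Obj r} (h : oDisj Ω₁ Ω₂) (h' : oDisj Ω₁' Ω₂')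
    (f : Mor Ω₁ Ω₁') (g : Mor Ω₂ Ω₂'), ∀ x ∈ F.obj Ω₁, ∀ y ∈ F.obj Ω₂,
    F.map (morUnion h h' f g) (η Ω₁ Ω₂ (x, y)) = η Ω₁' Ω₂' (F.map f x, F.map g y)
  D1 : ∀ {Ω₁ Ω₂ Ω₃ Ω₄ : Obj r}, oDisj Ω₁ Ω₂ → oDisj Ω₃ Ω₄ →
    oUnion Ω₁ Ω₂ = oUnion Ω₃ Ω₄ →
    η Ω₁ Ω₂ '' ((F.obj Ω₁ : Set ℕ) ×ˢ (F.obj Ω₂ : Set ℕ)) ∩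
      η Ω₃ Ω₄ '' ((F.obj Ω₃ : Set ℕ) ×ˢ (F.obj Ω₄ : Set ℕ)) =
    η Ω₁ Ω₂ ''
      ((η (oInter Ω₁ Ω₃) (oInter Ω₁ Ω₄) ''
          ((F.obj (oInter Ω₁ Ω₃) : Set ℕ) ×ˢ (F.obj (oInter Ω₁ Ω₄) : Set ℕ))) ×ˢ
        (η (oInter Ω₂ Ω₃) (oInter Ω₂ Ω₄) ''
          ((F.obj (oInter Ω₂ Ω₃) : Set ℕ) ×ˢ (F.obj (oInter Ω₂ Ω₄) : Set ℕ))))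

/-- The set `F_Η[Ω]` of indecomposable elements of `F[Ω]`. -/
def indec (F : Species r) (E : CompOp F) (Ω : Obj r) : Set ℕ :=
  if Ω = oEmpty r then ∅
  else (F.obj Ω : Set ℕ) \
    ⋃ (p : Obj r × Obj r) (_ : oDisj p.1 p.2) (_ : p.1 ≠ oEmpty r) (_ : p.2 ≠ oEmpty r)
      (_ : oUnion p.1 p.2 = Ω),
      E.η p.1 p.2 '' ((F.obj p.1 : Set ℕ) ×ˢ (F.obj p.2 : Set ℕ))

/-- The sets `F_Η^(k)[Ω]` of elements of `F[Ω]` consisting of exactly `k`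
indecomposable components. -/
def indecK (F : Species r) (E : CompOp F) : ℕ → Obj r → Set ℕ
  | 0 => fun Ω => if Ω = oEmpty r then (F.obj (oEmpty r) : Set ℕ) else ∅
  | (k + 1) => fun Ω => ⋃ (Ω₁ : Obj r) (_ : oSub Ω₁ Ω),
      E.η Ω₁ (oDiff Ω Ω₁) '' ((indec F E Ω₁) ×ˢ (indecK F E k (oDiff Ω Ω₁)))

/-- `Ω_I`: the componentwise disjoint union of the family `Ωs` over the index set `s`. -/
def bigU {ι : Type} [DecidableEq ι] (Ωs : ι → Obj r) (s : Finset ι) : Obj r :=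
  fun i => s.biUnion (fun j => Ωs j i)

/-- `Brack F E Ωs leaf s B` says that `B` is an `Η`-bracketing of the sets
`leaf (Ωs i)`, `i ∈ s` (each occurring exactly once).  For `leaf Ω = F[Ω]` this is an
`Η`-bracketing of the `F[Ωs i]`; for `leaf = indec F E` it is an `Η`-bracketing of
the `F_Η[Ωs i]`. -/
inductive Brack (F : Species r) (E : CompOp F) {ι : Type} [DecidableEq ι]
    (Ωs : ι → Obj r) (leaf : Obj r → Set ℕ) : Finset ι → Set ℕ → Prop
  | single (i : ι) : Brack F E Ωs leaf {i} (leaf (Ωs i))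
  | node {s t : Finset ι} {B₁ B₂ : Set ℕ} :
      Disjoint s t → s.Nonempty → t.Nonempty →
      Brack F E Ωs leaf s B₁ → Brack F E Ωs leaf t B₂ →
      Brack F E Ωs leaf (s ∪ t) (E.η (bigU Ωs s) (bigU Ωs t) '' (B₁ ×ˢ B₂))

/-- A `Λ`-weight on `(F, Η)`: Axioms (W0), (W1), (W2). -/
structure Weight {r : ℕ} (F : Species r) (E : CompOp F) (Λ : Type) [CommRing Λ]
    [Algebra ℚ Λ] where
  w : Obj r → ℕ → Λ
  W0 : ∀ x ∈ F.obj (oEmpty r), w (oEmpty r) x = 1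
  W1 : ∀ {Ω Ω' : Obj r} (f : Mor Ω Ω'), ∀ x ∈ F.obj Ω, w Ω' (F.map f x) = w Ω x
  W2 : ∀ {Ω₁ Ω₂ : Obj r}, oDisj Ω₁ Ω₂ → ∀ x ∈ indec F E Ω₁, ∀ y ∈ F.obj Ω₂,
    w (oUnion Ω₁ Ω₂) (E.η Ω₁ Ω₂ (x, y)) = w Ω₁ x * w Ω₂ y

/-- The standard object `([n₁], …, [n_r])`, with `[n] = {1, …, n}`. -/
def stdObj {r : ℕ} (n : Fin r → ℕ) : Obj r := fun i => Finset.Icc 1 (n i)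

/-- The exponential generating function
`Σ_{n₁,…,n_r ≥ 0} Σ_{x ∈ S[([n₁],…,[n_r])]} w(x) z₁^{n₁} ⋯ z_r^{n_r}/(n₁! ⋯ n_r!)`
of a subfamily `S` of a species `F`, with respect to a weight `w`. -/
def GF {r : ℕ} {Λ : Type} [CommRing Λ] [Algebra ℚ Λ] (F : Species r)
    (S : Obj r → Set ℕ) (w : Obj r → ℕ → Λ) : MvPowerSeries (Fin r) Λ :=
  fun d => (algebraMap ℚ Λ (∏ i, (1 / (Nat.factorial (d i)) : ℚ))) *
    ∑ x ∈ (F.obj (stdObj fun i => d i)).filter (fun x => x ∈ S (stdObj fun i => d i)),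
      w (stdObj fun i => d i) x

/-- The exponential `exp f = Σ_{k ≥ 0} f^k / k!` of a multivariate formal power
series `f` with zero constant term (the coefficient of a given monomial only
receives contributions from `k` at most the total degree). -/
def mvExp {σ Λ : Type} [CommRing Λ] [Algebra ℚ Λ] (f : MvPowerSeries σ Λ) :
    MvPowerSeries σ Λ :=
  fun d => ∑ k ∈ Finset.range ((d.sum fun _ m => m) + 1),
    algebraMap ℚ Λ ((1 : ℚ) / (Nat.factorial k)) * MvPowerSeries.coeff d (f ^ k)

/-- The logarithm `log f = Σ_{k ≥ 1} (-1)^{k+1} (f-1)^k / k` of a multivariate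
formal power series `f` with constant term `1`. -/
def mvLog {σ Λ : Type} [CommRing Λ] [Algebra ℚ Λ] (f : MvPowerSeries σ Λ) :
    MvPowerSeries σ Λ :=
  fun d => ∑ k ∈ Finset.Icc 1 (d.sum fun _ m => m),
    algebraMap ℚ Λ ((-1 : ℚ) ^ (k + 1) / k) * MvPowerSeries.coeff d ((f - 1) ^ k)

/-- The refined generating function `G̃F_F(z₁,…,z_r,y)`, a power series in
`z₁, …, z_r` with coefficients that are polynomials in `y` (recorded via
`Polynomial Λ`, the variable `y` being `Polynomial.X`):
`Σ_{n₁,…,n_r ≥ 0} Σ_k Σ_{x ∈ F_Η^(k)[([n₁],…,[n_r])]} y^k w(x) z₁^{n₁}⋯z_r^{n_r}/(n₁!⋯n_r!)`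
(for fixed `n₁, …, n_r` only the `k ≤ n₁ + ⋯ + n_r` contribute, since
`F_Η^(k)[Ω] = ∅ for k > ‖Ω‖`). -/
def tGF {r : ℕ} {Λ : Type} [CommRing Λ] [Algebra ℚ Λ] (F : Species r) (E : CompOp F)
    (w : Obj r → ℕ → Λ) : MvPowerSeries (Fin r) (Polynomial Λ) :=
  fun d => Polynomial.C (algebraMap ℚ Λ (∏ i, (1 / (Nat.factorial (d i)) : ℚ))) *
    ∑ k ∈ Finset.range ((∑ i, d i) + 1), Polynomial.X ^ k *
      Polynomial.C (∑ x ∈ (F.obj (stdObj fun i => d i)).filter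
          (fun x => x ∈ indecK F E k (stdObj fun i => d i)),
        w (stdObj fun i => d i) x)

/-- The species `E(F_Η)` of sets of `F_Η`-structures:  `E(F_Η)[Ω]` consists of all
finite sets `{(x₁,Ω₁),…,(x_k,Ω_k)}` with `x_i ∈ F_Η[Ω_i]`, the `Ω_i` nonempty and
pairwise componentwise disjoint, and `Ω₁ ⨿ ⋯ ⨿ Ω_k = Ω`. -/
def ESet {r : ℕ} (F : Species r) (E : CompOp F) (Ω : Obj r) :
    Set (Finset (ℕ × Obj r)) :=
  { s | (∀ p ∈ s, p.1 ∈ indec F E p.2 ∧ p.2 ≠ oEmpty r) ∧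
        (∀ p ∈ s, ∀ q ∈ s, p ≠ q → oDisj p.2 q.2) ∧
        (∀ i, Ω i = s.biUnion (fun p => p.2 i)) }

/-- The bijection between a finite set and its image under a map injective on it. -/
def imageEquiv {u : Finset ℕ} (g : ℕ → ℕ) (hg : Set.InjOn g (u : Set ℕ)) :
    {x // x ∈ u} ≃ {x // x ∈ u.image g} :=
  Equiv.ofBijective (fun x => ⟨g x, Finset.mem_image_of_mem g x.2⟩) (by
    constructor
    · rintro ⟨a, ha⟩ ⟨b, hb⟩ hab
      exact Subtype.ext (hg (by exact_mod_cast ha) (by exact_mod_cast hb)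
        (congrArg Subtype.val hab))
    · rintro ⟨y, hy⟩
      rcases Finset.mem_image.mp hy with ⟨a, ha, rfl⟩
      exact ⟨⟨a, ha⟩, rfl⟩)

/-- The underlying function `ℕ → ℕ` of the `i`-th component of a morphism. -/
def apMor {Ω Ω' : Obj r} (f : Mor Ω Ω') (i : Fin r) (a : ℕ) : ℕ :=
  if h : a ∈ Ω i then ((f i) ⟨a, h⟩ : ℕ) else a

/-- The componentwise image of a subobject `O ⊆ Ω` under a morphism `f : Ω → Ω'`. -/
def oImage {Ω Ω' : Obj r} (f : Mor Ω Ω') (O : Obj r) : Obj r :=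
  fun i => (O i).image (apMor f i)

/-- The restriction of a morphism `f : Ω → Ω'` to a subobject `O ⊆ Ω`. -/
def restrictMor {Ω Ω' : Obj r} (f : Mor Ω Ω') {O : Obj r} (hO : oSub O Ω) :
    Mor O (oImage f O) :=
  fun i => imageEquiv (apMor f i) (by
    intro a ha b hb hab
    have ha' : a ∈ Ω i := hO i (by exact_mod_cast ha)
    have hb' : b ∈ Ω i := hO i (by exact_mod_cast hb)
    have h1 : ((f i) ⟨a, ha'⟩ : ℕ) = ((f i) ⟨b, hb'⟩ : ℕ) := by
      simpa [apMor, dif_pos ha', dif_pos hb'] using hab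
    have h2 := (f i).injective (Subtype.ext h1)
    exact congrArg Subtype.val h2)

/-- The induced action of a morphism `f : Ω → Ω'` on `E(F_Η)[Ω]`. -/
def Emap {r : ℕ} (F : Species r) {Ω Ω' : Obj r} (f : Mor Ω Ω')
    (s : Finset (ℕ × Obj r)) : Finset (ℕ × Obj r) :=
  s.image (fun p =>
    if h : oSub p.2 Ω then (F.map (restrictMor f h) p.1, oImage f p.2) else p)


/-! ### Auxiliary object-level lemmas -/

section Aux

variable {r : ℕ}

lemma objext {A B : Obj r} (h : ∀ i a, a ∈ A i ↔ a ∈ B i) : A = B :=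
  funext fun i => Finset.ext fun a => h i a

lemma oSub_trans {A B C : Obj r} (h1 : oSub A B) (h2 : oSub B C) : oSub A C :=
  fun i => (h1 i).trans (h2 i)

lemma oDisj_diff {Ω A : Obj r} : oDisj A (oDiff Ω A) := by
  intro i
  simp only [oDiff, Finset.disjoint_left, Finset.mem_sdiff]
  tauto

lemma oSub_diff {Ω A : Obj r} : oSub (oDiff Ω A) Ω := by
  intro i a ha
  exact (Finset.mem_sdiff.mp ha).1

lemma oUnion_diff {Ω A : Obj r} (hA : oSub A Ω) : oUnion A (oDiff Ω A) = Ω := by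
  apply objext; intro i a
  have h1 : a ∈ A i → a ∈ Ω i := fun h => hA i h
  simp only [oUnion, oDiff, Finset.mem_union, Finset.mem_sdiff]
  tauto

lemma oDiff_eq {Ω A B : Obj r} (h : oDisj A B) (hU : oUnion A B = Ω) :
    B = oDiff Ω A := by
  subst hU
  apply objext; intro i a
  have h2 : a ∈ A i → a ∉ B i := fun ha => Finset.disjoint_left.mp (h i) ha
  simp only [oDiff, oUnion, Finset.mem_sdiff, Finset.mem_union]
  tauto

lemma oSub_of_union {Ω A B : Obj r} (hU : oUnion A B = Ω) : oSub A Ω := by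
  subst hU; intro i a ha; exact Finset.mem_union_left _ ha

lemma oSub_of_union' {Ω A B : Obj r} (hU : oUnion A B = Ω) : oSub B Ω := by
  subst hU; intro i a ha; exact Finset.mem_union_right _ ha

lemma oEmpty_or_exists {A : Obj r} : A = oEmpty r ∨ ∃ i a, a ∈ A i := by
  by_cases h : A = oEmpty r
  · exact Or.inl h
  · right
    by_contra hc
    push_neg at hc
    exact h (objext fun i a => by simp [oEmpty, hc i a])

lemma oUnion_empty_left {B : Obj r} : oUnion (oEmpty r) B = B := by
  apply objext; intro i a; simp [oUnion, oEmpty]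

lemma oUnion_empty_right {B : Obj r} : oUnion B (oEmpty r) = B := by
  apply objext; intro i a; simp [oUnion, oEmpty]

lemma oDisj_empty_left {B : Obj r} : oDisj (oEmpty r) B := by
  intro i; simp [oEmpty]

lemma oDisj_empty_right {B : Obj r} : oDisj B (oEmpty r) := by
  intro i; simp [oEmpty]

lemma oInter_self {A : Obj r} : oInter A A = A := by
  apply objext; intro i a; simp [oInter]

lemma oInter_empty_left {A : Obj r} : oInter (oEmpty r) A = oEmpty r := by
  apply objext; intro i a; simp [oInter, oEmpty]

lemma oInter_empty_right {A : Obj r} : oInter A (oEmpty r) = oEmpty r := by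
  apply objext; intro i a; simp [oInter, oEmpty]

/-- `A ∩ I = I` when `I ⊆ A`. -/
lemma c1 {A I : Obj r} (hI : oSub I A) : oInter A I = I := by
  apply objext; intro i a
  have h1 : a ∈ I i → a ∈ A i := fun h => hI i h
  simp only [oInter, Finset.mem_inter]; tauto

/-- `A ∩ (Ω \ I) = A \ I` when `A ⊆ Ω`. -/
lemma c2 {Ω A I : Obj r} (hA : oSub A Ω) : oInter A (oDiff Ω I) = oDiff A I := by
  apply objext; intro i a
  have h1 : a ∈ A i → a ∈ Ω i := fun h => hA i h
  simp only [oInter, oDiff, Finset.mem_inter, Finset.mem_sdiff]; tauto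

/-- `(Ω \ A) ∩ I = ∅` when `I ⊆ A`. -/
lemma c3 {Ω A I : Obj r} (hI : oSub I A) : oInter (oDiff Ω A) I = oEmpty r := by
  apply objext; intro i a
  have h1 : a ∈ I i → a ∈ A i := fun h => hI i h
  simp only [oInter, oDiff, oEmpty, Finset.mem_inter, Finset.mem_sdiff,
    Finset.notMem_empty, iff_false]
  tauto

/-- `(Ω \ A) ∩ (Ω \ I) = Ω \ A` when `I ⊆ A`. -/
lemma c4 {Ω A I : Obj r} (hI : oSub I A) :
    oInter (oDiff Ω A) (oDiff Ω I) = oDiff Ω A := by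
  apply objext; intro i a
  have h1 : a ∈ I i → a ∈ A i := fun h => hI i h
  simp only [oInter, oDiff, Finset.mem_inter, Finset.mem_sdiff]; tauto

/-- `(A ∩ A') ∪ (A ∩ (Ω \ A')) = A` when `A ⊆ Ω`. -/
lemma c5 {Ω A A' : Obj r} (hA : oSub A Ω) :
    oUnion (oInter A A') (oInter A (oDiff Ω A')) = A := by
  apply objext; intro i a
  have h1 : a ∈ A i → a ∈ Ω i := fun h => hA i h
  simp only [oUnion, oInter, oDiff, Finset.mem_union, Finset.mem_inter,
    Finset.mem_sdiff]
  tauto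

/-- `(Ω\A) ∩ (A ∪ B) = B` when `B ⊆ Ω \ A`. -/
lemma c7 {Ω A B : Obj r} (hB : oSub B (oDiff Ω A)) :
    oInter (oDiff Ω A) (oUnion A B) = B := by
  apply objext; intro i a
  have h1 : a ∈ B i → a ∈ Ω i ∧ a ∉ A i := fun h => Finset.mem_sdiff.mp (hB i h)
  simp only [oInter, oDiff, oUnion, Finset.mem_inter, Finset.mem_sdiff,
    Finset.mem_union]
  tauto

/-- `(Ω\A) ∩ (Ω \ (A ∪ B)) = (Ω\A) \ B`. -/
lemma c8 {Ω A B : Obj r} :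
    oInter (oDiff Ω A) (oDiff Ω (oUnion A B)) = oDiff (oDiff Ω A) B := by
  apply objext; intro i a
  simp only [oInter, oDiff, oUnion, Finset.mem_inter, Finset.mem_sdiff,
    Finset.mem_union]
  tauto

/-- `A ∩ (A ∪ B) = A`. -/
lemma c9 {A B : Obj r} : oInter A (oUnion A B) = A := by
  apply objext; intro i a
  simp only [oInter, oUnion, Finset.mem_inter, Finset.mem_union]; tauto

/-- `A ∩ (Ω \ (A ∪ B)) = ∅`. -/
lemma c10 {Ω A B : Obj r} : oInter A (oDiff Ω (oUnion A B)) = oEmpty r := by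
  apply objext; intro i a
  simp only [oInter, oDiff, oUnion, oEmpty, Finset.mem_inter, Finset.mem_sdiff,
    Finset.mem_union, Finset.notMem_empty, iff_false]
  tauto

/-- `(Ω\A) ∩ A' = A'` when `A' ⊆ Ω` and `A ∩ A' = ∅`. -/
lemma c12 {Ω A A' : Obj r} (hA' : oSub A' Ω) (hd : oInter A A' = oEmpty r) :
    oInter (oDiff Ω A) A' = A' := by
  apply objext; intro i a
  have h1 : a ∈ A' i → a ∈ Ω i := fun h => hA' i h
  have h2 : a ∈ A i → a ∈ A' i → False := by
    intro ha ha'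
    have : a ∈ oInter A A' i := Finset.mem_inter.mpr ⟨ha, ha'⟩
    rw [hd] at this
    simp [oEmpty] at this
  simp only [oInter, oDiff, Finset.mem_inter, Finset.mem_sdiff]
  tauto

/-- `Ω \ A \ A' = Ω \ A' \ A`. -/
lemma oDiff_comm {Ω A A' : Obj r} :
    oDiff (oDiff Ω A) A' = oDiff (oDiff Ω A') A := by
  apply objext; intro i a
  simp only [oDiff, Finset.mem_sdiff]; tauto

/-- `A ∪ (A' ∪ C) = A' ∪ (A ∪ C)`. -/
lemma oUnion_left_comm {A A' C : Obj r} :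
    oUnion A (oUnion A' C) = oUnion A' (oUnion A C) := by
  apply objext; intro i a
  simp only [oUnion, Finset.mem_union]; tauto

lemma oUnion_sub {Ω A B : Obj r} (hA : oSub A Ω) (hB : oSub B Ω) :
    oSub (oUnion A B) Ω := by
  intro i a ha
  rcases Finset.mem_union.mp ha with h | h
  · exact hA i h
  · exact hB i h

/-- total size of an object -/
def osize (Ω : Obj r) : ℕ := ∑ i, (Ω i).card

lemma osize_diff_lt {Ω A : Obj r} (hA : oSub A Ω) (hne : A ≠ oEmpty r) :
    osize (oDiff Ω A) < osize Ω := by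
  rcases oEmpty_or_exists (A := A) with h | ⟨i, a, ha⟩
  · exact absurd h hne
  · apply Finset.sum_lt_sum (fun j _ => Finset.card_le_card (fun x hx => (Finset.mem_sdiff.mp hx).1))
    refine ⟨i, Finset.mem_univ i, ?_⟩
    apply Finset.card_lt_card
    constructor
    · exact fun x hx => (Finset.mem_sdiff.mp hx).1
    · intro hsub
      have := hsub (hA i ha)
      simp only [oDiff, Finset.mem_sdiff] at this
      exact this.2 ha

end Aux

section Aux2

variable {r : ℕ} (F : Species r) (E : CompOp F)

/-- The image set `η(Ω₁,Ω₂)(F[Ω₁] × F[Ω₂])`. -/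
def im (A B : Obj r) : Set ℕ :=
  E.η A B '' ((F.obj A : Set ℕ) ×ˢ (F.obj B : Set ℕ))

variable {F E}

lemma mem_im {A B : Obj r} {x : ℕ} :
    x ∈ im F E A B ↔ ∃ p q, p ∈ F.obj A ∧ q ∈ F.obj B ∧ E.η A B (p, q) = x := by
  constructor
  · rintro ⟨⟨p, q⟩, ⟨hp, hq⟩, heq⟩
    exact ⟨p, q, hp, hq, heq⟩
  · rintro ⟨p, q, hp, hq, heq⟩
    exact ⟨(p, q), ⟨hp, hq⟩, heq⟩

lemma mem_im_of {A B : Obj r} {p q : ℕ} (hp : p ∈ F.obj A) (hq : q ∈ F.obj B) :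
    E.η A B (p, q) ∈ im F E A B :=
  mem_im.mpr ⟨p, q, hp, hq, rfl⟩

lemma im_subset {A B : Obj r} (h : oDisj A B) :
    im F E A B ⊆ (F.obj (oUnion A B) : Set ℕ) := by
  rintro x hx
  rcases mem_im.mp hx with ⟨p, q, hp, hq, heq⟩
  rw [← heq]
  exact E.mem_η h p hp q hq

lemma eta_inj {A B : Obj r} (h : oDisj A B) {p q p' q' : ℕ}
    (hp : p ∈ F.obj A) (hq : q ∈ F.obj B) (hp' : p' ∈ F.obj A) (hq' : q' ∈ F.obj B)
    (heq : E.η A B (p, q) = E.η A B (p', q')) : p = p' ∧ q = q' := by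
  have := E.inj_η h (Set.mem_prod.mpr ⟨by exact_mod_cast hp, by exact_mod_cast hq⟩)
    (Set.mem_prod.mpr ⟨by exact_mod_cast hp', by exact_mod_cast hq'⟩) heq
  exact ⟨congrArg Prod.fst this, congrArg Prod.snd this⟩

/-- `F[B] ⊆ im(∅, B)` and `F[B] ⊆ im(B, ∅)`, given `F[∅] ≠ ∅`. -/
lemma full_left (hne : (F.obj (oEmpty r)).Nonempty) {B : Obj r} {b : ℕ}
    (hb : b ∈ F.obj B) : b ∈ im F E (oEmpty r) B := by
  have hD := E.D1 (Ω₁ := oEmpty r) (Ω₂ := B) (Ω₃ := oEmpty r) (Ω₄ := B)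
    oDisj_empty_left oDisj_empty_left rfl
  rw [oInter_empty_left, oInter_empty_left, oInter_self,
    oInter_empty_right (A := B)] at hD
  have hDeq : im F E (oEmpty r) B =
      E.η (oEmpty r) B '' ((im F E (oEmpty r) (oEmpty r)) ×ˢ (im F E (oEmpty r) B)) := by
    simpa [im, Set.inter_self] using hD
  have hsub1 : im F E (oEmpty r) (oEmpty r) ⊆ (F.obj (oEmpty r) : Set ℕ) := by
    have := im_subset (F := F) (E := E) (A := oEmpty r) (B := oEmpty r) oDisj_empty_left
    rwa [oUnion_empty_left] at this
  have hsub2 : im F E (oEmpty r) B ⊆ (F.obj B : Set ℕ) := by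
    have := im_subset (F := F) (E := E) (A := oEmpty r) (B := B) oDisj_empty_left
    rwa [oUnion_empty_left] at this
  have hinj : Set.InjOn (E.η (oEmpty r) B)
      ((F.obj (oEmpty r) : Set ℕ) ×ˢ (F.obj B : Set ℕ)) := E.inj_η oDisj_empty_left
  have hprod : ((F.obj (oEmpty r) : Set ℕ) ×ˢ (F.obj B : Set ℕ)) =
      ((im F E (oEmpty r) (oEmpty r)) ×ˢ (im F E (oEmpty r) B)) := by
    apply (hinj.image_eq_image_iff (le_refl _)
      (Set.prod_mono hsub1 hsub2)).mp
    exact hDeq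
  obtain ⟨e, he⟩ := hne
  have : ((e, b) : ℕ × ℕ) ∈ ((im F E (oEmpty r) (oEmpty r)) ×ˢ (im F E (oEmpty r) B)) := by
    rw [← hprod]
    exact Set.mem_prod.mpr ⟨by exact_mod_cast he, by exact_mod_cast hb⟩
  exact this.2

lemma full_right (hne : (F.obj (oEmpty r)).Nonempty) {B : Obj r} {b : ℕ}
    (hb : b ∈ F.obj B) : b ∈ im F E B (oEmpty r) := by
  have hD := E.D1 (Ω₁ := B) (Ω₂ := oEmpty r) (Ω₃ := B) (Ω₄ := oEmpty r)
    oDisj_empty_right oDisj_empty_right rfl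
  rw [oInter_self, oInter_empty_right (A := B), oInter_empty_left,
    oInter_empty_left] at hD
  have hDeq : im F E B (oEmpty r) =
      E.η B (oEmpty r) '' ((im F E B (oEmpty r)) ×ˢ (im F E (oEmpty r) (oEmpty r))) := by
    simpa [im, Set.inter_self] using hD
  have hsub1 : im F E B (oEmpty r) ⊆ (F.obj B : Set ℕ) := by
    have := im_subset (F := F) (E := E) (A := B) (B := oEmpty r) oDisj_empty_right
    rwa [oUnion_empty_right] at this
  have hsub2 : im F E (oEmpty r) (oEmpty r) ⊆ (F.obj (oEmpty r) : Set ℕ) := by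
    have := im_subset (F := F) (E := E) (A := oEmpty r) (B := oEmpty r) oDisj_empty_left
    rwa [oUnion_empty_left] at this
  have hinj : Set.InjOn (E.η B (oEmpty r))
      ((F.obj B : Set ℕ) ×ˢ (F.obj (oEmpty r) : Set ℕ)) := E.inj_η oDisj_empty_right
  have hprod : ((F.obj B : Set ℕ) ×ˢ (F.obj (oEmpty r) : Set ℕ)) =
      ((im F E B (oEmpty r)) ×ˢ (im F E (oEmpty r) (oEmpty r))) := by
    apply (hinj.image_eq_image_iff (le_refl _)
      (Set.prod_mono hsub1 hsub2)).mp
    exact hDeq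
  obtain ⟨e, he⟩ := hne
  have : ((b, e) : ℕ × ℕ) ∈ ((im F E B (oEmpty r)) ×ˢ (im F E (oEmpty r) (oEmpty r))) := by
    rw [← hprod]
    exact Set.mem_prod.mpr ⟨by exact_mod_cast hb, by exact_mod_cast he⟩
  exact this.1

end Aux2

section Aux3

variable {r : ℕ} {F : Species r} {E : CompOp F}

lemma oInter_sub_left {A B : Obj r} : oSub (oInter A B) A :=
  fun i a ha => (Finset.mem_inter.mp ha).1

lemma oInter_sub_right {A B : Obj r} : oSub (oInter A B) B :=
  fun i a ha => (Finset.mem_inter.mp ha).2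

lemma oDisj_mono {A B A' B' : Obj r} (h : oDisj A B) (hA : oSub A' A)
    (hB : oSub B' B) : oDisj A' B' := fun i =>
  Finset.disjoint_left.mpr fun {a} ha hb =>
    Finset.disjoint_left.mp (h i) (hA i ha) (hB i hb)

/-- Axiom (D1) restated with `im`. -/
lemma D1' {A B C D : Obj r} (h12 : oDisj A B) (h34 : oDisj C D)
    (hU : oUnion A B = oUnion C D) :
    im F E A B ∩ im F E C D =
      E.η A B '' ((im F E (oInter A C) (oInter A D)) ×ˢ
        (im F E (oInter B C) (oInter B D))) :=
  E.D1 h12 h34 hU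

/-- The two pieces of a decomposed element refine along any second decomposition. -/
lemma split_pieces {Ω A A' : Obj r} (hA : oSub A Ω) (hA' : oSub A' Ω)
    {p q : ℕ} (hp : p ∈ F.obj A) (hq : q ∈ F.obj (oDiff Ω A))
    (hx : E.η A (oDiff Ω A) (p, q) ∈ im F E A' (oDiff Ω A')) :
    p ∈ im F E (oInter A A') (oInter A (oDiff Ω A')) ∧
    q ∈ im F E (oInter (oDiff Ω A) A') (oInter (oDiff Ω A) (oDiff Ω A')) := by
  have hD := D1' (F := F) (E := E) (A := A) (B := oDiff Ω A) (C := A')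
    (D := oDiff Ω A') oDisj_diff oDisj_diff
    (by rw [oUnion_diff hA, oUnion_diff hA'])
  have hmem : E.η A (oDiff Ω A) (p, q) ∈
      im F E A (oDiff Ω A) ∩ im F E A' (oDiff Ω A') := ⟨mem_im_of hp hq, hx⟩
  rw [hD] at hmem
  obtain ⟨⟨p1, q1⟩, ⟨hp1, hq1⟩, heq⟩ := hmem
  have hd1 : oDisj (oInter A A') (oInter A (oDiff Ω A')) :=
    oDisj_mono oDisj_diff oInter_sub_right oInter_sub_right
  have hd2 : oDisj (oInter (oDiff Ω A) A') (oInter (oDiff Ω A) (oDiff Ω A')) :=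
    oDisj_mono oDisj_diff oInter_sub_right oInter_sub_right
  have hp1F : p1 ∈ F.obj A := by
    have := im_subset hd1 hp1
    rwa [c5 hA] at this
  have hq1F : q1 ∈ F.obj (oDiff Ω A) := by
    have := im_subset hd2 hq1
    rwa [c5 (Ω := Ω) oSub_diff] at this
  obtain ⟨hpe, hqe⟩ := eta_inj oDisj_diff hp1F hq1F hp hq heq
  exact ⟨hpe ▸ hp1, hqe ▸ hq1⟩

/-- Transfer of splits of the first component. -/
lemma trans1 (hne : (F.obj (oEmpty r)).Nonempty) {Ω A I : Obj r} {p q : ℕ}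
    (hA : oSub A Ω) (hI : oSub I A)
    (hp : p ∈ F.obj A) (hq : q ∈ F.obj (oDiff Ω A)) :
    p ∈ im F E I (oDiff A I) ↔
      E.η A (oDiff Ω A) (p, q) ∈ im F E I (oDiff Ω I) := by
  constructor
  · intro hpI
    have hD := D1' (F := F) (E := E) (A := A) (B := oDiff Ω A) (C := I)
      (D := oDiff Ω I) oDisj_diff oDisj_diff
      (by rw [oUnion_diff hA, oUnion_diff (oSub_trans hI hA)])
    rw [c1 hI, c2 hA, c3 hI, c4 hI] at hD
    have hx : E.η A (oDiff Ω A) (p, q) ∈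
        im F E A (oDiff Ω A) ∩ im F E I (oDiff Ω I) := by
      rw [hD]
      exact ⟨(p, q), ⟨hpI, full_left hne hq⟩, rfl⟩
    exact hx.2
  · intro hx
    have h := (split_pieces hA (oSub_trans hI hA) hp hq hx).1
    rwa [c1 hI, c2 hA] at h

/-- Transfer of splits of the second component. -/
lemma trans2 (hne : (F.obj (oEmpty r)).Nonempty) {Ω A B : Obj r} {p q : ℕ}
    (hA : oSub A Ω) (hB : oSub B (oDiff Ω A))
    (hp : p ∈ F.obj A) (hq : q ∈ F.obj (oDiff Ω A)) :
    q ∈ im F E B (oDiff (oDiff Ω A) B) ↔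
      E.η A (oDiff Ω A) (p, q) ∈
        im F E (oUnion A B) (oDiff Ω (oUnion A B)) := by
  have hABsub : oSub (oUnion A B) Ω := oUnion_sub hA (oSub_trans hB oSub_diff)
  constructor
  · intro hqB
    have hD := D1' (F := F) (E := E) (A := A) (B := oDiff Ω A) (C := oUnion A B)
      (D := oDiff Ω (oUnion A B)) oDisj_diff oDisj_diff
      (by rw [oUnion_diff hA, oUnion_diff hABsub])
    rw [c9, c10, c7 hB, c8] at hD
    have hx : E.η A (oDiff Ω A) (p, q) ∈
        im F E A (oDiff Ω A) ∩ im F E (oUnion A B) (oDiff Ω (oUnion A B)) := by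
      rw [hD]
      exact ⟨(p, q), ⟨full_right hne hp, hqB⟩, rfl⟩
    exact hx.2
  · intro hx
    have h := (split_pieces hA hABsub hp hq hx).2
    rwa [c7 hB, c8] at h

end Aux3

section Aux4

variable {r : ℕ} {F : Species r} {E : CompOp F}

lemma oSub_empty {A : Obj r} (h : oSub A (oEmpty r)) : A = oEmpty r :=
  objext fun i a => ⟨fun ha => h i ha, fun ha => by simp [oEmpty] at ha⟩

lemma indec_ne_empty {A : Obj r} {p : ℕ} (h : p ∈ indec F E A) : A ≠ oEmpty r := by
  intro hA
  rw [indec, if_pos hA] at h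
  exact h

lemma indec_subset {A : Obj r} {p : ℕ} (h : p ∈ indec F E A) : p ∈ F.obj A := by
  rw [indec] at h
  split_ifs at h with hA
  · exact absurd h (Set.notMem_empty p)
  · exact h.1

lemma mem_indec_iff {A : Obj r} {p : ℕ} (hA : A ≠ oEmpty r) :
    p ∈ indec F E A ↔ p ∈ F.obj A ∧
      ∀ I, oSub I A → I ≠ oEmpty r → oDiff A I ≠ oEmpty r →
        p ∉ im F E I (oDiff A I) := by
  rw [indec, if_neg hA]
  simp only [Set.mem_diff, Set.mem_iUnion]
  constructor
  · rintro ⟨hpF, hnot⟩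
    refine ⟨hpF, fun I hI hIne hdne hpI => hnot ?_⟩
    exact ⟨(I, oDiff A I), oDisj_diff, hIne, hdne, oUnion_diff hI, hpI⟩
  · rintro ⟨hpF, hnot⟩
    refine ⟨hpF, ?_⟩
    rintro ⟨⟨P1, P2⟩, hdisj, h1ne, h2ne, hU, hpim⟩
    have hP2 : P2 = oDiff A P1 := oDiff_eq hdisj hU
    have hP1 : oSub P1 A := oSub_of_union hU
    subst hP2
    exact hnot P1 hP1 h1ne h2ne hpim

lemma mem_indecK_zero {Ω : Obj r} {x : ℕ} :
    x ∈ indecK F E 0 Ω ↔ Ω = oEmpty r ∧ x ∈ F.obj (oEmpty r) := by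
  by_cases h : Ω = oEmpty r <;> simp [indecK, h]

lemma mem_indecK_succ {k : ℕ} {Ω : Obj r} {x : ℕ} :
    x ∈ indecK F E (k + 1) Ω ↔
      ∃ A, oSub A Ω ∧ ∃ p q, p ∈ indec F E A ∧
        q ∈ indecK F E k (oDiff Ω A) ∧ E.η A (oDiff Ω A) (p, q) = x := by
  constructor
  · intro h
    rw [indecK] at h
    simp only [Set.mem_iUnion] at h
    obtain ⟨A, hA, hmem⟩ := h
    obtain ⟨⟨p, q⟩, ⟨hp, hq⟩, heq⟩ := hmem
    exact ⟨A, hA, p, q, hp, hq, heq⟩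
  · rintro ⟨A, hA, p, q, hp, hq, heq⟩
    rw [indecK]
    simp only [Set.mem_iUnion]
    exact ⟨A, hA, ⟨(p, q), ⟨hp, hq⟩, heq⟩⟩

lemma indecK_subset : ∀ (k : ℕ) {Ω : Obj r} {x : ℕ},
    x ∈ indecK F E k Ω → x ∈ F.obj Ω := by
  intro k
  induction k with
  | zero =>
    intro Ω x hx
    obtain ⟨h1, h2⟩ := mem_indecK_zero.mp hx
    rw [h1]; exact h2
  | succ k ih =>
    intro Ω x hx
    obtain ⟨A, hA, p, q, hp, hq, heq⟩ := mem_indecK_succ.mp hx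
    have := E.mem_η oDisj_diff p (indec_subset hp) q (ih hq)
    rw [heq, oUnion_diff hA] at this
    exact this

lemma indecK_trivial (h : F.obj (oEmpty r) = ∅) :
    ∀ (k : ℕ) (Ω : Obj r), indecK F E k Ω = ∅ := by
  intro k
  induction k with
  | zero =>
    intro Ω
    ext x
    simp [mem_indecK_zero, h]
  | succ k ih =>
    intro Ω
    ext x
    simp only [Set.mem_empty_iff_false, iff_false]
    intro hx
    obtain ⟨A, hA, p, q, hp, hq, heq⟩ := mem_indecK_succ.mp hx
    rw [ih] at hq
    exact hq

lemma indecK_succ_empty {k : ℕ} {x : ℕ} (h : x ∈ indecK F E (k + 1) (oEmpty r)) :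
    False := by
  obtain ⟨A, hA, p, q, hp, _, _⟩ := mem_indecK_succ.mp h
  exact indec_ne_empty hp (oSub_empty hA)

end Aux4

section Aux5

variable {r : ℕ} {F : Species r} {E : CompOp F}

lemma oInter_comm {A B : Obj r} : oInter A B = oInter B A := by
  apply objext; intro i a
  simp only [oInter, Finset.mem_inter]; tauto

/-- `A \ (A ∩ A') = A \ A'`. -/
lemma c15 {A A' : Obj r} : oDiff A (oInter A A') = oDiff A A' := by
  apply objext; intro i a
  simp only [oDiff, oInter, Finset.mem_sdiff, Finset.mem_inter]; tauto

lemma c1' {A B : Obj r} (h : oSub A B) : oInter A B = A := by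
  apply objext; intro i a
  have h1 : a ∈ A i → a ∈ B i := fun ha => h i ha
  simp only [oInter, Finset.mem_inter]; tauto

lemma oSub_of_diff_empty {A B : Obj r} (h : oDiff A B = oEmpty r) : oSub A B := by
  intro i a ha
  by_contra hb
  have : a ∈ oDiff A B i := Finset.mem_sdiff.mpr ⟨ha, hb⟩
  rw [h] at this
  simp [oEmpty] at this

lemma oSub_antisymm {A B : Obj r} (h1 : oSub A B) (h2 : oSub B A) : A = B :=
  objext fun i a => ⟨fun ha => h1 i ha, fun hb => h2 i hb⟩

lemma empty_of_sub_disj {A B : Obj r} (h : oSub A B) (hd : oInter A B = oEmpty r) :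
    A = oEmpty r := by
  rw [c1' h] at hd
  exact hd

lemma c16 {Ω A A' : Obj r} (hA : oSub A Ω) (hd : oInter A A' = oEmpty r) :
    oSub A (oDiff Ω A') := by
  intro i a ha
  refine Finset.mem_sdiff.mpr ⟨hA i ha, fun ha' => ?_⟩
  have : a ∈ oInter A A' i := Finset.mem_inter.mpr ⟨ha, ha'⟩
  rw [hd] at this
  simp [oEmpty] at this

lemma c17 {A A' I : Obj r} (hI : oSub I A) (hd : oInter A A' = oEmpty r) :
    oInter A (oUnion A' I) = I := by
  apply objext; intro i a
  have h1 : a ∈ I i → a ∈ A i := fun h => hI i h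
  have h2 : a ∈ A i → a ∈ A' i → False := by
    intro ha ha'
    have : a ∈ oInter A A' i := Finset.mem_inter.mpr ⟨ha, ha'⟩
    rw [hd] at this
    simp [oEmpty] at this
  simp only [oInter, oUnion, Finset.mem_inter, Finset.mem_union]
  tauto

lemma c18 {Ω A A' I : Obj r} (hA : oSub A Ω) (hd : oInter A A' = oEmpty r) :
    oInter A (oDiff Ω (oUnion A' I)) = oDiff A I := by
  apply objext; intro i a
  have h1 : a ∈ A i → a ∈ Ω i := fun h => hA i h
  have h2 : a ∈ A i → a ∈ A' i → False := by
    intro ha ha'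
    have : a ∈ oInter A A' i := Finset.mem_inter.mpr ⟨ha, ha'⟩
    rw [hd] at this
    simp [oEmpty] at this
  simp only [oInter, oDiff, oUnion, Finset.mem_inter, Finset.mem_sdiff,
    Finset.mem_union]
  tauto

lemma ne_empty_of_sub {A B : Obj r} (h : oSub A B) (hne : A ≠ oEmpty r) :
    B ≠ oEmpty r := by
  intro hB
  exact hne (oSub_empty (hB ▸ h))

/-- Dichotomy from indecomposability. -/
lemma indec_dichotomy {Ω A A' : Obj r} {p : ℕ} (hp : p ∈ indec F E A)
    (hA : oSub A Ω)
    (hmem : p ∈ im F E (oInter A A') (oInter A (oDiff Ω A'))) :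
    oInter A A' = oEmpty r ∨ oSub A A' := by
  by_cases h1 : oInter A A' = oEmpty r
  · exact Or.inl h1
  by_cases h2 : oDiff A A' = oEmpty r
  · exact Or.inr (oSub_of_diff_empty h2)
  exfalso
  rw [c2 hA] at hmem
  have := ((mem_indec_iff (indec_ne_empty hp)).mp hp).2 (oInter A A')
    oInter_sub_left h1 (by rw [c15]; exact h2)
  rw [c15] at this
  exact this hmem

/-- Membership in `indecK` depends only on the family of splits. -/
lemma sigma_det (hne : (F.obj (oEmpty r)).Nonempty) :
    ∀ (m : ℕ) (Γ : Obj r) (z z₂ : ℕ), z ∈ indecK F E m Γ → z₂ ∈ F.obj Γ →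
      (∀ C, oSub C Γ →
        (z ∈ im F E C (oDiff Γ C) ↔ z₂ ∈ im F E C (oDiff Γ C))) →
      z₂ ∈ indecK F E m Γ := by
  intro m
  induction m with
  | zero =>
    intro Γ z z₂ hz hz₂ _
    obtain ⟨hΓ, _⟩ := mem_indecK_zero.mp hz
    subst hΓ
    exact mem_indecK_zero.mpr ⟨rfl, hz₂⟩
  | succ b ih =>
    intro Γ z z₂ hz hz₂ hsig
    obtain ⟨A, hA, u, v, hu, hv, heq⟩ := mem_indecK_succ.mp hz
    have hAne : A ≠ oEmpty r := indec_ne_empty hu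
    have huF : u ∈ F.obj A := indec_subset hu
    have hvF : v ∈ F.obj (oDiff Γ A) := indecK_subset b hv
    have hzim : z ∈ im F E A (oDiff Γ A) := by
      rw [← heq]; exact mem_im_of huF hvF
    have hz₂im : z₂ ∈ im F E A (oDiff Γ A) := (hsig A hA).mp hzim
    obtain ⟨u₂, v₂, hu₂F, hv₂F, heq₂⟩ := mem_im.mp hz₂im
    -- u₂ is indecomposable
    have hu₂ : u₂ ∈ indec F E A := by
      refine (mem_indec_iff hAne).mpr ⟨hu₂F, fun I hI hIne hDne hmem => ?_⟩
      have h1 : E.η A (oDiff Γ A) (u₂, v₂) ∈ im F E I (oDiff Γ I) :=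
        (trans1 hne hA hI hu₂F hv₂F).mp hmem
      rw [heq₂] at h1
      have h2 : z ∈ im F E I (oDiff Γ I) :=
        (hsig I (oSub_trans hI hA)).mpr h1
      rw [← heq] at h2
      have h3 : u ∈ im F E I (oDiff A I) :=
        (trans1 hne hA hI huF hvF).mpr h2
      exact ((mem_indec_iff hAne).mp hu).2 I hI hIne hDne h3
    -- v₂ has the same splits as v
    have hv₂ : v₂ ∈ indecK F E b (oDiff Γ A) := by
      refine ih (oDiff Γ A) v v₂ hv hv₂F (fun C hC => ?_)
      have e1 := trans2 (E := E) hne hA hC huF hvF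
      have e2 := trans2 (E := E) hne hA hC hu₂F hv₂F
      rw [heq] at e1
      rw [heq₂] at e2
      rw [e1, e2]
      exact hsig (oUnion A C) (oUnion_sub hA (oSub_trans hC oSub_diff))
    exact mem_indecK_succ.mpr ⟨A, hA, u₂, v₂, hu₂, hv₂, heq₂⟩

end Aux5

section Aux6

variable {r : ℕ} {F : Species r} {E : CompOp F}

/-- Cancellation: removing an indecomposable first component of an element of
`F_Η^(b+1)[Ω]` leaves an element of `F_Η^(b)`. -/
lemma cancel (hne : (F.obj (oEmpty r)).Nonempty) :
    ∀ (n : ℕ) (Ω : Obj r), osize Ω < n →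
      ∀ (b : ℕ) (A : Obj r) (p q : ℕ), oSub A Ω → p ∈ indec F E A →
        q ∈ F.obj (oDiff Ω A) →
        E.η A (oDiff Ω A) (p, q) ∈ indecK F E (b + 1) Ω →
        q ∈ indecK F E b (oDiff Ω A) := by
  intro n
  induction n with
  | zero => intro Ω h; omega
  | succ n ih =>
    intro Ω hsize b A p q hA hp hq hx
    have hAne : A ≠ oEmpty r := indec_ne_empty hp
    have hpF : p ∈ F.obj A := indec_subset hp
    obtain ⟨A', hA'Ω, p', q', hp', hq', heq'⟩ := mem_indecK_succ.mp hx
    have hA'ne : A' ≠ oEmpty r := indec_ne_empty hp'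
    have hp'F : p' ∈ F.obj A' := indec_subset hp'
    have hq'F : q' ∈ F.obj (oDiff Ω A') := indecK_subset b hq'
    have hxim : E.η A (oDiff Ω A) (p, q) ∈ im F E A' (oDiff Ω A') := by
      rw [← heq']; exact mem_im_of hp'F hq'F
    have hx'im : E.η A' (oDiff Ω A') (p', q') ∈ im F E A (oDiff Ω A) := by
      rw [heq']; exact mem_im_of hpF hq
    have sp := split_pieces hA hA'Ω hpF hq hxim
    have sp' := split_pieces hA'Ω hA hp'F hq'F hx'im
    rcases indec_dichotomy hp hA sp.1 with hd | hsub1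
    · -- main case : `A ∩ A' = ∅`
      have hd' : oInter A' A = oEmpty r := by rw [oInter_comm]; exact hd
      -- kill the case `A' ⊆ A`
      rcases indec_dichotomy hp' hA'Ω sp'.1 with _ | hsub2
      swap
      · exact absurd (empty_of_sub_disj hsub2 hd') hA'ne
      have hAΔ' : oSub A (oDiff Ω A') := c16 hA hd
      have hA'Δ : oSub A' (oDiff Ω A) := c16 hA'Ω hd'
      have hΓ : oDiff (oDiff Ω A) A' = oDiff (oDiff Ω A') A := oDiff_comm
      -- decompose q and q'
      have hqim : q ∈ im F E A' (oDiff (oDiff Ω A) A') := by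
        have h := sp.2
        rwa [c12 hA'Ω hd, c2 oSub_diff] at h
      obtain ⟨y₂, z₂, hy₂F, hz₂F, heqq⟩ := mem_im.mp hqim
      have hq'im : q' ∈ im F E A (oDiff (oDiff Ω A') A) := by
        have h := sp'.2
        rwa [c12 hA hd', c2 oSub_diff] at h
      obtain ⟨y, z, hyF, hzF, heqq'⟩ := mem_im.mp hq'im
      -- `b ≥ 1`
      cases b with
      | zero =>
        obtain ⟨hΔ', _⟩ := mem_indecK_zero.mp hq'
        exact absurd (oSub_empty (hΔ' ▸ hAΔ')) hAne
      | succ b' =>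
        -- `y` is indecomposable
        have hy : y ∈ indec F E A := by
          refine (mem_indec_iff hAne).mpr ⟨hyF, fun I hI hIne hDne hmem => ?_⟩
          have h1 := (trans1 hne hAΔ' hI hyF hzF).mp hmem
          rw [heqq'] at h1
          have h2 := (trans2 hne hA'Ω (oSub_trans hI hAΔ') hp'F hq'F).mp h1
          rw [heq'] at h2
          have h3 := (split_pieces hA
            (oUnion_sub hA'Ω (oSub_trans hI hA)) hpF hq h2).1
          rw [c17 hI hd, c18 hA hd] at h3
          exact ((mem_indec_iff hAne).mp hp).2 I hI hIne hDne h3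
        -- `y₂` is indecomposable
        have hy₂ : y₂ ∈ indec F E A' := by
          refine (mem_indec_iff hA'ne).mpr ⟨hy₂F, fun I hI hIne hDne hmem => ?_⟩
          have h1 := (trans1 hne hA'Δ hI hy₂F hz₂F).mp hmem
          rw [heqq] at h1
          have h2 := (trans2 hne hA (oSub_trans hI hA'Δ) hpF hq).mp h1
          rw [← heq'] at h2
          have h3 := (split_pieces hA'Ω
            (oUnion_sub hA (oSub_trans hI hA'Ω)) hp'F hq'F h2).1
          rw [c17 hI hd', c18 hA'Ω hd'] at h3
          exact ((mem_indec_iff hA'ne).mp hp').2 I hI hIne hDne h3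
        -- `z ∈ F_Η^(b')` by the induction hypothesis
        have hq'' : E.η A (oDiff (oDiff Ω A') A) (y, z) ∈
            indecK F E (b' + 1) (oDiff Ω A') := by rw [heqq']; exact hq'
        have hlt : osize (oDiff Ω A') < n := by
          have := osize_diff_lt hA'Ω hA'ne
          omega
        have hzK : z ∈ indecK F E b' (oDiff (oDiff Ω A') A) :=
          ih (oDiff Ω A') hlt b' A y z hAΔ' hy hzF hq''
        -- `z₂` has the same splits as `z`, hence `z₂ ∈ F_Η^(b')`
        have hzK2 : z ∈ indecK F E b' (oDiff (oDiff Ω A) A') := by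
          rw [hΓ]; exact hzK
        have hz₂K : z₂ ∈ indecK F E b' (oDiff (oDiff Ω A) A') := by
          refine sigma_det hne b' _ z z₂ hzK2 hz₂F (fun C hC => ?_)
          have hCG : oSub C (oDiff (oDiff Ω A') A) := by rw [← hΓ]; exact hC
          have t1 := trans2 (E := E) hne hAΔ' hCG hyF hzF
          rw [heqq'] at t1
          have t2 := trans2 (E := E) hne hA'Ω
            (oUnion_sub hAΔ' (oSub_trans hCG oSub_diff)) hp'F hq'F
          rw [heq'] at t2
          have t3 := trans2 (E := E) hne hA'Δ hC hy₂F hz₂F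
          rw [heqq] at t3
          have t4 := trans2 (E := E) hne hA
            (oUnion_sub hA'Δ (oSub_trans hC oSub_diff)) hpF hq
          have hbr : oUnion A' (oUnion A C) = oUnion A (oUnion A' C) :=
            oUnion_left_comm
          have hdc : oDiff (oDiff (oDiff Ω A) A') C =
              oDiff (oDiff (oDiff Ω A') A) C := by rw [hΓ]
          constructor
          · intro h
            have h1 : z ∈ im F E C (oDiff (oDiff (oDiff Ω A') A) C) := by
              rw [← hdc]; exact h
            have h2 := t2.mp (t1.mp h1)
            rw [hbr] at h2
            exact t3.mpr (t4.mpr h2)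
          · intro h
            have h2 := t4.mp (t3.mp h)
            rw [← hbr] at h2
            have h3 := t1.mpr (t2.mpr h2)
            rwa [← hdc] at h3
        exact mem_indecK_succ.mpr ⟨A', hA'Δ, y₂, z₂, hy₂, hz₂K, heqq⟩
    · -- case `A ⊆ A'` : then `A = A'`
      rcases indec_dichotomy hp' hA'Ω sp'.1 with hd2 | hsub2
      · have hd : oInter A A' = oEmpty r := by rw [oInter_comm]; exact hd2
        exact absurd (empty_of_sub_disj hsub1 hd) hAne
      · have hAA : A' = A := oSub_antisymm hsub2 hsub1
        subst hAA
        obtain ⟨_, hq2⟩ := eta_inj oDisj_diff hp'F hq'F hpF hq heq'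
        rw [hq2] at hq'
        exact hq'

end Aux6

section Aux7

variable {r : ℕ} {F : Species r} {E : CompOp F}

lemma disjK (hne : (F.obj (oEmpty r)).Nonempty) :
    ∀ (n : ℕ) (Ω : Obj r), osize Ω < n → ∀ (k l : ℕ) (x : ℕ),
      x ∈ indecK F E k Ω → x ∈ indecK F E l Ω → k = l := by
  intro n
  induction n with
  | zero => intro Ω h; omega
  | succ n ih =>
    intro Ω hsize k l x hk hl
    match k, l with
    | 0, 0 => rfl
    | 0, l + 1 =>
      obtain ⟨hΩ, _⟩ := mem_indecK_zero.mp hk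
      subst hΩ
      exact absurd hl indecK_succ_empty
    | k + 1, 0 =>
      obtain ⟨hΩ, _⟩ := mem_indecK_zero.mp hl
      subst hΩ
      exact absurd hk indecK_succ_empty
    | a + 1, b + 1 =>
      obtain ⟨A, hA, p, q, hp, hq, heq⟩ := mem_indecK_succ.mp hk
      have hqF : q ∈ F.obj (oDiff Ω A) := indecK_subset a hq
      have hxl : E.η A (oDiff Ω A) (p, q) ∈ indecK F E (b + 1) Ω := by
        rw [heq]; exact hl
      have hq2 : q ∈ indecK F E b (oDiff Ω A) :=
        cancel hne (osize Ω + 1) Ω (by omega) b A p q hA hp hqF hxl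
      have hlt : osize (oDiff Ω A) < n := by
        have := osize_diff_lt hA (indec_ne_empty hp)
        omega
      have : a = b := ih (oDiff Ω A) hlt a b q hq hq2
      omega

end Aux7

/-- For `k ≠ ℓ`, the sets `F_Η^(k)[Ω]` and `F_Η^(ℓ)[Ω]` are disjoint. -/
theorem stmt15 {r : ℕ} (hr : 0 < r) (F : Species r) (E : CompOp F)
    (hF : ∃ Ω : Obj r, (F.obj Ω).Nonempty)
    (k ℓ : ℕ) (hkℓ : k ≠ ℓ) (Ω : Obj r) :
    indecK F E k Ω ∩ indecK F E ℓ Ω = ∅ := by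
  apply Set.eq_empty_iff_forall_notMem.mpr
  rintro x ⟨h1, h2⟩
  by_cases hemp : F.obj (oEmpty r) = ∅
  · rw [indecK_trivial hemp] at h1
    exact h1
  · exact hkℓ (disjK (Finset.nonempty_iff_ne_empty.mpr hemp)
      (osize Ω + 1) Ω (by omega) k ℓ x h1 h2)

end
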